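/- Let n ≥ 3 and let V_1, …, V_n be points of ℝ² in strictly convex, positively oriented (anticlockwise) position, i.e., with indices read modulo n, for every i and every k ∉ {i−1, i} one has det(V_i − V_{i−1}, V_k − V_i) > 0. For each i let θ_i ∈ [0, π) be the unique angle such that the edge vector V_i − V_{i−1} is parallel to (cos θ_i, sin θ_i), and assume the θ_i are pairwise distinct and that θ_1 = min{θ_1, …, θ_n}. Then there exists j with 1 ≤ j ≤ n−1 such that θ_1 < θ_2 < ⋯ < θ_j, θ_{j+1} < θ_{j+2} < ⋯ < θ_n, and θ_{j+1} < θ_j. (This is the paper's Theorem: if a line arrangement gives rise to an n-gonality L_1 → L_2 → ⋯ → L_n → L_1 in anticlockwise order, then the cycle at infinity has a 2-standard consecutive structure respecting the slope property.) -/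

import Mathlib

private lemma tri_identity (a b c x y : ℝ) :
    Real.sin (c - a) * (Real.cos b * y - Real.sin b * x)
      = Real.sin (c - b) * (Real.cos a * y - Real.sin a * x)
        + Real.sin (b - a) * (Real.cos c * y - Real.sin c * x) := by
  rw [Real.sin_sub, Real.sin_sub, Real.sin_sub]; ring

private lemma sign_pospos : ∀ a b : ℝ, 0 < a * b → 0 < a → 0 < b := by intro a b h ha; nlinarith
private lemma sign_negneg : ∀ a b : ℝ, 0 < a * b → a < 0 → b < 0 := by intro a b h ha; nlinarith
private lemma sign_posneg : ∀ a b : ℝ, a * b < 0 → 0 < a → b < 0 := by intro a b h ha; nlinarith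
private lemma sign_negpos : ∀ a b : ℝ, a * b < 0 → a < 0 → 0 < b := by intro a b h ha; nlinarith

private lemma core_contra (α β γ r0 rq rg x y : ℝ)
    (hα : 0 ≤ α) (hγ : γ < Real.pi) (h1 : α < β) (h2 : β < γ)
    (C1 : 0 < r0 * (Real.cos α * y - Real.sin α * x))
    (C2 : rq * (Real.cos β * y - Real.sin β * x) < 0)
    (C3 : rg * (Real.cos γ * y - Real.sin γ * x) < 0)
    (h0q : 0 < r0 * rq) (h0g : r0 * rg < 0) : False := by
  have sba : 0 < Real.sin (β - α) := Real.sin_pos_of_pos_of_lt_pi (by linarith) (by linarith)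
  have scb : 0 < Real.sin (γ - β) := Real.sin_pos_of_pos_of_lt_pi (by linarith) (by linarith)
  have sca : 0 < Real.sin (γ - α) := Real.sin_pos_of_pos_of_lt_pi (by linarith) (by linarith)
  have hid := tri_identity α β γ x y
  set Fa := Real.cos α * y - Real.sin α * x with hFadef
  set Fb := Real.cos β * y - Real.sin β * x with hFbdef
  set Fc := Real.cos γ * y - Real.sin γ * x with hFcdef
  rcases lt_trichotomy r0 0 with h | h | h
  · have hq : rq < 0 := sign_negneg _ _ h0q h
    have hg : 0 < rg := sign_negpos _ _ h0g h
    have hFa : Fa < 0 := sign_negneg _ _ C1 h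
    have hFb : 0 < Fb := sign_negpos _ _ C2 hq
    have hFc : Fc < 0 := sign_posneg _ _ C3 hg
    nlinarith [mul_pos sca hFb, mul_neg_of_pos_of_neg scb hFa, mul_neg_of_pos_of_neg sba hFc]
  · rw [h, zero_mul] at h0q; exact lt_irrefl 0 h0q
  · have hq : 0 < rq := sign_pospos _ _ h0q h
    have hg : rg < 0 := sign_posneg _ _ h0g h
    have hFa : 0 < Fa := sign_pospos _ _ C1 h
    have hFb : Fb < 0 := sign_posneg _ _ C2 hq
    have hFc : 0 < Fc := sign_negpos _ _ C3 hg
    nlinarith [mul_neg_of_pos_of_neg sca hFb, mul_pos scb hFa, mul_pos sba hFc]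

attribute [local instance] Fin.NatCast.instNatCast
attribute [local instance] Fin.instCommRing

/-- If points `V 0, …, V (n-1)` of `ℝ²` are in strictly convex, positively oriented
(anticlockwise) position, the direction angles `θ i ∈ [0, π)` of the edges are pairwise
distinct and `θ 0` is minimal, then the angle sequence splits into two increasing runs:
there is `j` with `1 ≤ j ≤ n - 1` such that `θ 0 < ⋯ < θ (j-1)`, `θ j < ⋯ < θ (n-1)`
and `θ j < θ (j-1)`.  (Paper's Theorem: an anticlockwise `n`-gonality gives a
`2`-standard consecutive structure on the cycle at infinity respecting the slope
property; indices here are `0`-based.) -/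
theorem cycle_at_infinity_of_global_gonality
    (n : ℕ) [NeZero n] (hn : 3 ≤ n)
    (V : Fin n → ℝ × ℝ) (θ : Fin n → ℝ)
    (hconvex : ∀ i k : Fin n, k ≠ i - 1 → k ≠ i →
      0 < (V i - V (i - 1)).1 * (V k - V i).2 - (V i - V (i - 1)).2 * (V k - V i).1)
    (hθrange : ∀ i : Fin n, θ i ∈ Set.Ico 0 Real.pi)
    (hpar : ∀ i : Fin n, ∃ r : ℝ, r ≠ 0 ∧
      V i - V (i - 1) = r • (Real.cos (θ i), Real.sin (θ i)))
    (hinj : Function.Injective θ)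
    (hmin : ∀ i : Fin n, θ 0 ≤ θ i) :
    ∃ j : ℕ, ∃ _h1 : 1 ≤ j, ∃ h2 : j < n,
      (∀ s t : Fin n, (s : ℕ) < (t : ℕ) → (t : ℕ) < j → θ s < θ t) ∧
      (∀ s t : Fin n, j ≤ (s : ℕ) → (s : ℕ) < (t : ℕ) → θ s < θ t) ∧
      θ ⟨j, h2⟩ < θ ⟨j - 1, lt_of_le_of_lt (Nat.sub_le j 1) h2⟩ := by
  classical
  choose r hr0 hre using hpar
  -- cast helpers
  have hcast : ∀ t : ℕ, t < n → ((t : Fin n) : ℕ) = t := fun t ht => by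
    simp [Fin.val_natCast, Nat.mod_eq_of_lt ht]
  have hcne : ∀ a b : ℕ, a < n → b < n → a ≠ b → (a : Fin n) ≠ (b : Fin n) := by
    intro a b ha hb hab h
    apply hab; rw [← hcast a ha, ← hcast b hb, h]
  have hsubcast : ∀ t : ℕ, 1 ≤ t → ((t - 1 : ℕ) : Fin n) = (t : Fin n) - 1 := by
    intro t h1; push_cast [Nat.cast_sub h1]; ring
  -- θ distinctness / sine dichotomy
  have θne : ∀ a b : Fin n, a ≠ b → θ a ≠ θ b := fun a b hab h => hab (hinj h)
  have dich : ∀ a b : Fin n, a ≠ b →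
      (θ a < θ b ∧ 0 < Real.sin (θ b - θ a)) ∨ (θ b < θ a ∧ Real.sin (θ b - θ a) < 0) := by
    intro a b hab
    obtain ⟨ha0, hap⟩ := hθrange a
    obtain ⟨hb0, hbp⟩ := hθrange b
    rcases (θne a b hab).lt_or_gt with h | h
    · exact Or.inl ⟨h, Real.sin_pos_of_pos_of_lt_pi (by linarith) (by linarith)⟩
    · refine Or.inr ⟨h, ?_⟩
      have : 0 < Real.sin (θ a - θ b) := Real.sin_pos_of_pos_of_lt_pi (by linarith) (by linarith)
      rw [show θ b - θ a = -(θ a - θ b) by ring, Real.sin_neg]; linarith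
  -- adjacent cross-product lemma
  have Ladj : ∀ i : Fin n, 0 < r i * r (i + 1) * Real.sin (θ (i + 1) - θ i) := by
    intro i
    have h1 : i + 1 - 1 = i := add_sub_cancel_right i 1
    have hone : ((1 : Fin n) : ℕ) = 1 := by rw [Fin.val_one', Nat.mod_eq_of_lt (by omega)]
    have hne2 : (i + 1 : Fin n) ≠ i := by
      intro h
      have h2 : (1 : Fin n) = 0 := by
        have := congrArg (· - i) h
        simpa [add_comm, add_sub_cancel_right, sub_self] using this
      rw [h2] at hone; simp at hone
    have hne1 : (i + 1 : Fin n) ≠ i - 1 := by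
      intro h
      have h2 : (2 : Fin n) = 0 := by
        calc (2 : Fin n) = i + 1 + 1 - i := by ring
          _ = i - 1 + 1 - i := by rw [h]
          _ = 0 := by ring
      have hv : ((2 : Fin n) : ℕ) = 2 := by
        have e : ((2:ℕ) : Fin n) = (2 : Fin n) := by push_cast; ring
        rw [← e, Fin.val_natCast, Nat.mod_eq_of_lt (by omega)]
      rw [h2] at hv; simp at hv
    have H := hconvex i (i + 1) hne1 hne2
    have B := hre (i + 1)
    rw [h1] at B
    rw [hre i, B] at H
    simp only [Prod.smul_mk, smul_eq_mul] at H
    rw [Real.sin_sub]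
    nlinarith [H]
  -- product ↔ ascent
  have prodIff : ∀ a b : Fin n, a ≠ b → 0 < r a * r b * Real.sin (θ b - θ a) →
      (0 < r a * r b ↔ θ a < θ b) := by
    intro a b hab H
    rcases dich a b hab with ⟨h1, h2⟩ | ⟨h1, h2⟩
    · exact ⟨fun _ => h1, fun _ => by nlinarith⟩
    · constructor
      · intro h; exfalso; nlinarith
      · intro h; exact absurd h (not_lt.mpr h1.le)
  have hadd1 : ∀ p : ℕ, 1 ≤ p → ((p - 1 : ℕ) : Fin n) + 1 = (p : Fin n) := by
    intro p h1
    have e : ((p - 1 : ℕ) : Fin n) + 1 = (((p - 1) + 1 : ℕ) : Fin n) := by push_cast; ring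
    rw [e]; congr 1; omega
  have prodIffNat : ∀ p : ℕ, 1 ≤ p → p < n →
      (0 < r ((p - 1 : ℕ) : Fin n) * r ((p : ℕ) : Fin n) ↔
        θ ((p - 1 : ℕ) : Fin n) < θ ((p : ℕ) : Fin n)) := by
    intro p h1 h2
    have hne : ((p - 1 : ℕ) : Fin n) ≠ ((p : ℕ) : Fin n) := hcne _ _ (by omega) h2 (by omega)
    have H := Ladj ((p - 1 : ℕ) : Fin n)
    rw [hadd1 p h1] at H
    exact prodIff _ _ hne H
  have prodNe : ∀ a b : Fin n, r a * r b ≠ 0 := fun a b => mul_ne_zero (hr0 a) (hr0 b)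
  -- chain of positive products
  have chainPos : ∀ t : ℕ, t < n →
      (∀ p : ℕ, 1 ≤ p → p ≤ t → θ ((p - 1 : ℕ) : Fin n) < θ ((p : ℕ) : Fin n)) →
      0 < r 0 * r ((t : ℕ) : Fin n) := by
    intro t
    induction t with
    | zero =>
      intro _ _
      have := mul_self_pos.mpr (hr0 0)
      simpa using this
    | succ t ih =>
      intro ht hasc
      have h1 : 0 < r 0 * r ((t : ℕ) : Fin n) :=
        ih (by omega) (fun p hp1 hp2 => hasc p hp1 (by omega))
      have h2 : 0 < r ((t : ℕ) : Fin n) * r ((t + 1 : ℕ) : Fin n) := by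
        have hiff := prodIffNat (t + 1) (by omega) ht
        simp only [Nat.add_sub_cancel] at hiff
        exact hiff.mpr (by
          have := hasc (t + 1) (by omega) le_rfl
          simpa [Nat.add_sub_cancel] using this)
      nlinarith [mul_pos h1 h2, sq_nonneg (r ((t : ℕ) : Fin n))]
  have hne0 : ∀ t : ℕ, 0 < t → t < n → ((t : ℕ) : Fin n) ≠ 0 := by
    intro t h1 h2
    have := hcne t 0 h2 (by omega) (by omega)
    simpa using this
  have θ0lt : ∀ a : Fin n, a ≠ 0 → θ 0 < θ a := by
    intro a ha
    rcases (θne 0 a (Ne.symm ha)).lt_or_gt with h | h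
    · exact h
    · exact absurd (hmin a) (not_le.mpr h)
  -- wrap is a descent with negative product
  have ewrap : ((n - 1 : ℕ) : Fin n) + 1 = 0 := by
    have e : ((n - 1 : ℕ) : Fin n) + 1 = ((n - 1 + 1 : ℕ) : Fin n) := by push_cast; ring
    rw [e, show n - 1 + 1 = n by omega, Fin.natCast_self]
  have wrapNeg : r ((n - 1 : ℕ) : Fin n) * r 0 < 0 := by
    have hne : ((n - 1 : ℕ) : Fin n) ≠ 0 := hne0 (n - 1) (by omega) (by omega)
    have H := Ladj ((n - 1 : ℕ) : Fin n)
    rw [ewrap] at H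
    rcases dich _ 0 hne with ⟨h1, _⟩ | ⟨_, h2⟩
    · exact absurd h1 (not_lt.mpr (hmin _))
    · nlinarith
  -- existence of a descent
  have hDesc : ∃ p : ℕ, 1 ≤ p ∧ p < n ∧ θ ((p : ℕ) : Fin n) < θ ((p - 1 : ℕ) : Fin n) := by
    by_contra hcon
    push_neg at hcon
    have hall : ∀ p : ℕ, 1 ≤ p → p ≤ n - 1 → θ ((p - 1 : ℕ) : Fin n) < θ ((p : ℕ) : Fin n) := by
      intro p h1 h2
      have hne : ((p - 1 : ℕ) : Fin n) ≠ ((p : ℕ) : Fin n) :=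
        hcne _ _ (by omega) (by omega) (by omega)
      rcases (θne _ _ hne).lt_or_gt with h | h
      · exact h
      · exact absurd h (not_lt.mpr (hcon p h1 (by omega)))
    have := chainPos (n - 1) (by omega) hall
    nlinarith [wrapNeg]
  set j := Nat.find hDesc with hjdef
  obtain ⟨hj1, hjn, hjdesc⟩ := Nat.find_spec hDesc
  rw [← hjdef] at hj1 hjn hjdesc
  have hjmin : ∀ p : ℕ, 1 ≤ p → p < j → θ ((p - 1 : ℕ) : Fin n) < θ ((p : ℕ) : Fin n) := by
    intro p h1 h2
    rw [hjdef] at h2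
    have h3 := Nat.find_min hDesc h2
    push_neg at h3
    have h4 := h3 h1 (by omega)
    have hne : ((p - 1 : ℕ) : Fin n) ≠ ((p : ℕ) : Fin n) :=
      hcne _ _ (by omega) (by omega) (by omega)
    rcases (θne _ _ hne).lt_or_gt with h | h
    · exact h
    · exact absurd h (not_lt.mpr h4)
  have hj2 : 2 ≤ j := by
    by_contra h
    have hj1' : j = 1 := by omega
    rw [hj1'] at hjdesc
    simp only [Nat.sub_self, Nat.cast_zero] at hjdesc
    exact absurd hjdesc (not_lt.mpr (hmin _))
  -- the main induction: no second descent
  have main : ∀ t : ℕ, t < n → j ≤ t →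
      (r 0 * r ((t : ℕ) : Fin n) < 0) ∧
      (j < t → θ ((t - 1 : ℕ) : Fin n) < θ ((t : ℕ) : Fin n)) := by
    intro t
    induction t using Nat.strong_induction_on with
    | _ t IH =>
    intro ht hjt
    rcases eq_or_lt_of_le hjt with heq | hlt
    · -- t = j : the first descent
      have hprev : 0 < r 0 * r ((j - 1 : ℕ) : Fin n) :=
        chainPos (j - 1) (by omega) (fun p hp1 hp2 => hjmin p hp1 (by omega))
      have hflip : r ((j - 1 : ℕ) : Fin n) * r ((j : ℕ) : Fin n) < 0 := by
        have hiff := prodIffNat j (by omega) (by omega)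
        rcases (prodNe ((j - 1 : ℕ) : Fin n) ((j : ℕ) : Fin n)).lt_or_gt with h | h
        · exact h
        · exact absurd (hiff.mp h) (not_lt.mpr hjdesc.le)
      constructor
      · rw [← heq]
        nlinarith [mul_neg_of_pos_of_neg hprev hflip, sq_nonneg (r ((j - 1 : ℕ) : Fin n))]
      · intro h; exact absurd h (by omega)
    · -- j < t
      have hprev := (IH (t - 1) (by omega) (by omega) (by omega)).1
      have hasc : θ ((t - 1 : ℕ) : Fin n) < θ ((t : ℕ) : Fin n) := by
        by_contra hnot
        have hdesc : θ ((t : ℕ) : Fin n) < θ ((t - 1 : ℕ) : Fin n) := by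
          rcases (θne _ _ (hcne (t - 1) t (by omega) ht (by omega))).lt_or_gt with h | h
          · exact absurd h hnot
          · exact h
        have hflip : r ((t - 1 : ℕ) : Fin n) * r ((t : ℕ) : Fin n) < 0 := by
          have hiff := prodIffNat t (by omega) ht
          rcases (prodNe ((t - 1 : ℕ) : Fin n) ((t : ℕ) : Fin n)).lt_or_gt with h | h
          · exact h
          · exact absurd (hiff.mp h) (not_lt.mpr hdesc.le)
        have h0q : 0 < r 0 * r ((t : ℕ) : Fin n) := by
          nlinarith [mul_pos_of_neg_of_neg hprev hflip, sq_nonneg (r ((t - 1 : ℕ) : Fin n))]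
        -- the three-line contradiction
        set aq : Fin n := ((t : ℕ) : Fin n) with haqdef
        set ag : Fin n := ((t - 1 : ℕ) : Fin n) with hagdef
        have haqne : aq ≠ 0 := hne0 t (by omega) ht
        have hagne : ag ≠ 0 := hne0 (t - 1) (by omega) (by omega)
        have hsub : aq - 1 = ag := by rw [hagdef, haqdef, hsubcast t (by omega)]
        set D : ℝ × ℝ := V ag - V 0 with hDdef
        -- C1 : from hconvex 0 ag
        have h1a : ag ≠ (0 : Fin n) - 1 := by
          intro h
          have e : ag + 1 = 0 := by rw [h]; ring
          rw [hagdef, hadd1 t (by omega)] at e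
          exact haqne e
        have C1raw := hconvex 0 ag h1a hagne
        rw [hre 0] at C1raw
        simp only [Prod.smul_mk, smul_eq_mul] at C1raw
        have C1 : 0 < r 0 * (Real.cos (θ 0) * D.2 - Real.sin (θ 0) * D.1) := by
          rw [hDdef]; nlinarith [C1raw]
        -- C3 : from hconvex ag 0
        have h3a : (0 : Fin n) ≠ ag - 1 := by
          rw [hagdef, ← hsubcast (t - 1) (by omega)]
          have := hcne 0 (t - 1 - 1) (by omega) (by omega) (by omega)
          simpa using this
        have C3raw := hconvex ag 0 h3a (Ne.symm hagne)
        rw [hre ag] at C3raw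
        have e3 : V 0 - V ag = -D := by rw [hDdef]; abel
        rw [e3] at C3raw
        simp only [Prod.smul_mk, smul_eq_mul, Prod.fst_neg, Prod.snd_neg] at C3raw
        have C3 : r ag * (Real.cos (θ ag) * D.2 - Real.sin (θ ag) * D.1) < 0 := by
          nlinarith [C3raw]
        -- C2 : from hconvex aq 0
        have h2a : (0 : Fin n) ≠ aq - 1 := by
          rw [hsub, hagdef]
          have := hcne 0 (t - 1) (by omega) (by omega) (by omega)
          simpa using this
        have C2raw := hconvex aq 0 h2a (Ne.symm haqne)
        have hEdge : V aq - V (aq - 1) = r aq • (Real.cos (θ aq), Real.sin (θ aq)) := hre aq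
        have e2 : V 0 - V aq = -D - (V aq - V (aq - 1)) := by rw [hsub, hDdef]; abel
        rw [e2, hEdge] at C2raw
        simp only [Prod.smul_mk, smul_eq_mul, Prod.fst_sub, Prod.snd_sub,
          Prod.fst_neg, Prod.snd_neg] at C2raw
        have C2 : r aq * (Real.cos (θ aq) * D.2 - Real.sin (θ aq) * D.1) < 0 := by
          nlinarith [C2raw]
        exact core_contra (θ 0) (θ aq) (θ ag) (r 0) (r aq) (r ag) D.1 D.2
          (hθrange 0).1 (hθrange ag).2 (θ0lt aq haqne) hdesc C1 C2 C3 h0q hprev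
      have hflip2 : 0 < r ((t - 1 : ℕ) : Fin n) * r ((t : ℕ) : Fin n) :=
        (prodIffNat t (by omega) ht).mpr hasc
      constructor
      · nlinarith [mul_neg_of_neg_of_pos hprev hflip2, sq_nonneg (r ((t - 1 : ℕ) : Fin n))]
      · intro _; exact hasc
  -- chains of ascents give monotonicity
  have chainθ : ∀ a b : ℕ, a < b → b < n →
      (∀ p : ℕ, a < p → p ≤ b → θ ((p - 1 : ℕ) : Fin n) < θ ((p : ℕ) : Fin n)) →
      θ ((a : ℕ) : Fin n) < θ ((b : ℕ) : Fin n) := by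
    intro a b
    induction b with
    | zero => intro hab _ _; exact absurd hab (Nat.not_lt_zero a)
    | succ b ih =>
      intro hab hbn hstep
      by_cases h : a = b
      · subst h
        have := hstep (a + 1) (by omega) le_rfl
        simpa [Nat.add_sub_cancel] using this
      · have h1 : a < b := by omega
        have h2 := ih h1 (by omega) (fun p hp1 hp2 => hstep p hp1 (by omega))
        have h3 := hstep (b + 1) (by omega) le_rfl
        simp only [Nat.add_sub_cancel] at h3
        exact lt_trans h2 h3
  refine ⟨j, hj1, hjn, ?_, ?_, ?_⟩
  · intro s t hst htj
    have := chainθ s.val t.val hst t.isLt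
      (fun p hp1 hp2 => hjmin p (by omega) (by omega))
    rwa [Fin.cast_val_eq_self, Fin.cast_val_eq_self] at this
  · intro s t hjs hst
    have := chainθ s.val t.val hst t.isLt
      (fun p hp1 hp2 => (main p (by omega) (by omega)).2 (by omega))
    rwa [Fin.cast_val_eq_self, Fin.cast_val_eq_self] at this
  · have e1 : (⟨j, hjn⟩ : Fin n) = ((j : ℕ) : Fin n) := by
      apply Fin.ext; rw [hcast j hjn]
    have e2 : (⟨j - 1, lt_of_le_of_lt (Nat.sub_le j 1) hjn⟩ : Fin n) = ((j - 1 : ℕ) : Fin n) := by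
      apply Fin.ext; rw [hcast (j - 1) (by omega)]
    rw [e1, e2]
    exact hjdesc
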